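/- There exists an infinite set P ⊆ ℝ² with no 4 collinear points such that P contains no 6 pairwise visible points. -/

import Mathlib

/-- `v` and `w` are visible with respect to `P`: they are distinct and no point of `P`
lies in the open segment between them. -/
def Visible (P : Set (ℝ × ℝ)) (v w : ℝ × ℝ) : Prop :=
  v ≠ w ∧ ∀ p ∈ P, p ∉ openSegment ℝ v w

/-- `P` contains no 4 collinear points. -/
def No4Collinear (P : Set (ℝ × ℝ)) : Prop :=
  ∀ a ∈ P, ∀ b ∈ P, ∀ c ∈ P, ∀ d ∈ P,
    a ≠ b → a ≠ c → a ≠ d → b ≠ c → b ≠ d → c ≠ d →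
    ¬ Collinear ℝ ({a, b, c, d} : Set (ℝ × ℝ))

namespace BLBC

noncomputable section
open Classical Set

abbrev Pt := ℝ × ℝ

def det3 (u v w : Pt) : ℝ := (v.1-u.1)*(w.2-u.2) - (v.2-u.2)*(w.1-u.1)

lemma det3_self (u v : Pt) : det3 u v u = 0 := by simp [det3]

lemma det3_swap (u v w : Pt) : det3 u w v = - det3 u v w := by simp [det3]; ring

lemma seg_param {x y p : Pt} (h : p ∈ openSegment ℝ x y) :
    ∃ t : ℝ, 0 < t ∧ t < 1 ∧ p = x + t • (y - x) := by
  rcases h with ⟨a, b, ha, hb, hab, hp⟩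
  refine ⟨b, hb, by linarith, ?_⟩
  have ha' : a = 1 - b := by linarith
  rw [← hp, ha']
  ext <;> simp <;> ring

lemma seg_of_param {x y : Pt} (t : ℝ) (h0 : 0 < t) (h1 : t < 1) :
    x + t • (y - x) ∈ openSegment ℝ x y := by
  refine ⟨1 - t, t, by linarith, h0, by ring, ?_⟩
  ext <;> simp <;> ring

lemma seg_col {x y p : Pt} (h : p ∈ openSegment ℝ x y) : det3 x y p = 0 := by
  obtain ⟨t, _, _, rfl⟩ := seg_param h
  simp [det3]; ring

lemma seg_ne {x y p : Pt} (h : p ∈ openSegment ℝ x y) (hxy : x ≠ y) :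
    p ≠ x ∧ p ≠ y := by
  obtain ⟨t, h0, h1, rfl⟩ := seg_param h
  have hyx : y - x ≠ 0 := sub_ne_zero.mpr (Ne.symm hxy)
  constructor
  · intro h
    have h2 : t • (y - x) = 0 := by
      have := add_eq_left.mp h
      exact this
    rcases smul_eq_zero.mp h2 with h3 | h3
    · exact absurd h3 (ne_of_gt h0)
    · exact hyx h3
  · intro h
    have h2 : (1 - t) • (x - y) = 0 := by
      have : x + t • (y - x) - y = (1 - t) • (x - y) := by
        ext <;> simp <;> ring
      rw [← this, h, sub_self]
    rcases smul_eq_zero.mp h2 with h3 | h3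
    · have : t = 1 := by linarith [sub_eq_zero.mp (by linarith [h3] : (1:ℝ) - t = 0)]
      exact absurd this (ne_of_lt h1)
    · exact hxy (sub_eq_zero.mp h3)

lemma collinear_iff_det3 (u v w : Pt) :
    Collinear ℝ ({u, v, w} : Set Pt) ↔ det3 u v w = 0 := by
  constructor
  · intro h
    rw [collinear_iff_of_mem (Set.mem_insert u {v, w})] at h
    obtain ⟨d, hd⟩ := h
    obtain ⟨rv, hv⟩ := hd v (by simp)
    obtain ⟨rw, hw⟩ := hd w (by simp)
    have hv1 : v.1 = rv * d.1 + u.1 := by rw [hv]; simp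
    have hv2 : v.2 = rv * d.2 + u.2 := by rw [hv]; simp
    have hw1 : w.1 = rw * d.1 + u.1 := by rw [hw]; simp
    have hw2 : w.2 = rw * d.2 + u.2 := by rw [hw]; simp
    simp [det3, hv1, hv2, hw1, hw2]; ring
  · intro h
    by_cases hv : v = u
    · subst hv
      have : ({v, v, w} : Set Pt) = {v, w} := by simp
      rw [this]
      exact collinear_pair ℝ v w
    · rw [collinear_iff_of_mem (Set.mem_insert u {v, w})]
      refine ⟨v - u, ?_⟩
      intro p hp
      rcases hp with rfl | rfl | rfl
      · exact ⟨0, by simp⟩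
      · exact ⟨1, by ext <;> simp⟩
      · by_cases h1 : v.1 - u.1 ≠ 0
        · refine ⟨(p.1 - u.1) / (v.1 - u.1), ?_⟩
          have hd : (v.1-u.1)*(p.2-u.2) - (v.2-u.2)*(p.1-u.1) = 0 := h
          ext
          · simp; field_simp; ring
          · simp; field_simp; linarith [hd]
        · push_neg at h1
          have h2 : v.2 - u.2 ≠ 0 := by
            intro h2
            apply hv
            have e1 : v.1 = u.1 := by linarith
            have e2 : v.2 = u.2 := by linarith
            exact Prod.ext e1 e2
          refine ⟨(p.2 - u.2) / (v.2 - u.2), ?_⟩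
          have hd : (v.1-u.1)*(p.2-u.2) - (v.2-u.2)*(p.1-u.1) = 0 := h
          ext
          · simp; field_simp; nlinarith [hd, h1]
          · simp; field_simp; ring

lemma col_param {x y a : Pt} (hxy : x ≠ y) (h : det3 x y a = 0) :
    ∃ s : ℝ, a = x + s • (y - x) := by
  by_cases h1 : y.1 - x.1 ≠ 0
  · refine ⟨(a.1 - x.1) / (y.1 - x.1), ?_⟩
    have hd : (y.1-x.1)*(a.2-x.2) - (y.2-x.2)*(a.1-x.1) = 0 := h
    ext
    · simp; field_simp; ring
    · simp; field_simp; linarith [hd]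
  · push_neg at h1
    have h2 : y.2 - x.2 ≠ 0 := by
      intro h2
      exact hxy (Prod.ext (by linarith) (by linarith)).symm
    refine ⟨(a.2 - x.2) / (y.2 - x.2), ?_⟩
    have hd : (y.1-x.1)*(a.2-x.2) - (y.2-x.2)*(a.1-x.1) = 0 := h
    ext
    · simp; field_simp; nlinarith [hd, h2]
    · simp; field_simp; ring

lemma col_trans {x y a b c : Pt} (hxy : x ≠ y) (ha : det3 x y a = 0)
    (hb : det3 x y b = 0) (hc : det3 x y c = 0) : det3 a b c = 0 := by
  obtain ⟨sa, rfl⟩ := col_param hxy ha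
  obtain ⟨sb, rfl⟩ := col_param hxy hb
  obtain ⟨sc, rfl⟩ := col_param hxy hc
  simp [det3]; ring

lemma finite_quad {A B C : ℝ} (h : ¬ (A = 0 ∧ B = 0 ∧ C = 0)) :
    {t : ℝ | A*t^2 + B*t + C = 0}.Finite := by
  by_contra hinf
  replace hinf : Set.Infinite {t : ℝ | A*t^2 + B*t + C = 0} := hinf
  obtain ⟨s, hs, hcard⟩ := hinf.exists_subset_card_eq 3
  obtain ⟨t1, t2, t3, h12, h13, h23, rfl⟩ := Finset.card_eq_three.mp hcard
  have e1 : A*t1^2 + B*t1 + C = 0 := hs (by simp)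
  have e2 : A*t2^2 + B*t2 + C = 0 := hs (by simp)
  have e3 : A*t3^2 + B*t3 + C = 0 := hs (by simp)
  have d12 : (t1 - t2) * (A*(t1+t2) + B) = 0 := by linear_combination e1 - e2
  have d23 : (t2 - t3) * (A*(t2+t3) + B) = 0 := by linear_combination e2 - e3
  have g12 : A*(t1+t2) + B = 0 :=
    (mul_eq_zero.mp d12).resolve_left (sub_ne_zero.mpr h12)
  have g23 : A*(t2+t3) + B = 0 :=
    (mul_eq_zero.mp d23).resolve_left (sub_ne_zero.mpr h23)
  have hA : A * (t1 - t3) = 0 := by linear_combination g12 - g23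
  have hA0 : A = 0 := (mul_eq_zero.mp hA).resolve_right (sub_ne_zero.mpr h13)
  have hB0 : B = 0 := by rw [hA0] at g12; linarith
  have hC0 : C = 0 := by rw [hA0, hB0] at e1; linarith
  exact h ⟨hA0, hB0, hC0⟩

lemma finite_lin {A B : ℝ} (h : ¬ (A = 0 ∧ B = 0)) :
    {t : ℝ | A*t + B = 0}.Finite := by
  have : {t : ℝ | A*t + B = 0} = {t : ℝ | 0*t^2 + A*t + B = 0} := by
    ext t; simp
  rw [this]
  exact finite_quad (by tauto)

lemma exists_seed (L : List Pt) :
    ∃ p : Pt, p ∉ L ∧ ∀ u ∈ L, ∀ v ∈ L, u ≠ v → det3 u v p ≠ 0 := by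
  have hfin : (⋃ u ∈ L.toFinset, ⋃ v ∈ L.toFinset,
      {t : ℝ | u ≠ v ∧ det3 u v (t, t^2) = 0}).Finite := by
    refine Set.Finite.biUnion L.toFinset.finite_toSet fun u _ => ?_
    refine Set.Finite.biUnion L.toFinset.finite_toSet fun v _ => ?_
    by_cases huv : u = v
    · have : {t : ℝ | u ≠ v ∧ det3 u v (t, t^2) = 0} = ∅ := by
        ext t; simp [huv]
      rw [this]; exact Set.finite_empty
    · have hsub : {t : ℝ | u ≠ v ∧ det3 u v (t, t^2) = 0} ⊆
          {t : ℝ | (v.1-u.1)*t^2 + (-(v.2-u.2))*t + ((v.2-u.2)*u.1 - (v.1-u.1)*u.2) = 0} := by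
        intro t ht
        have := ht.2
        simp only [det3] at this
        simp only [Set.mem_setOf_eq]
        nlinarith [this]
      refine Set.Finite.subset (finite_quad ?_) hsub
      rintro ⟨hA, hB, -⟩
      apply huv
      have e1 : u.1 = v.1 := by linarith
      have e2 : u.2 = v.2 := by linarith
      exact Prod.ext e1 e2
  have hfin2 : (⋃ q ∈ L.toFinset, {t : ℝ | t = q.1}).Finite := by
    refine Set.Finite.biUnion L.toFinset.finite_toSet fun q _ => ?_
    exact Set.finite_singleton q.1
  obtain ⟨t, ht⟩ := (hfin.union hfin2).infinite_compl.nonempty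
  simp only [Set.mem_compl_iff, Set.mem_union, not_or] at ht
  refine ⟨(t, t^2), ?_, ?_⟩
  · intro hmem
    exact ht.2 (Set.mem_biUnion (List.mem_toFinset.mpr hmem) rfl)
  · intro u hu v hv huv hdet
    exact ht.1 (Set.mem_biUnion (List.mem_toFinset.mpr hu)
      (Set.mem_biUnion (List.mem_toFinset.mpr hv) ⟨huv, hdet⟩))

lemma det3_affine (u v x y : Pt) (t : ℝ) :
    det3 u v (x + t • (y - x)) =
      ((v.1-u.1)*(y.2-x.2) - (v.2-u.2)*(y.1-x.1)) * t + det3 u v x := by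
  simp [det3]; ring

lemma exists_blocker (L : List Pt) (x y : Pt) :
    ∃ p : Pt, p ∈ openSegment ℝ x y ∧
      ∀ u ∈ L, ∀ v ∈ L, u ≠ v → det3 u v p = 0 →
        det3 x y u = 0 ∧ det3 x y v = 0 := by
  set B : Set ℝ := ⋃ u ∈ L.toFinset, ⋃ v ∈ L.toFinset,
      {t : ℝ | u ≠ v ∧ ¬ (det3 x y u = 0 ∧ det3 x y v = 0) ∧
        det3 u v (x + t • (y - x)) = 0} with hB
  have hfin : B.Finite := by
    refine Set.Finite.biUnion L.toFinset.finite_toSet fun u _ => ?_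
    refine Set.Finite.biUnion L.toFinset.finite_toSet fun v _ => ?_
    by_cases hbad : u ≠ v ∧ ¬ (det3 x y u = 0 ∧ det3 x y v = 0)
    · have hsub : {t : ℝ | u ≠ v ∧ ¬ (det3 x y u = 0 ∧ det3 x y v = 0) ∧
          det3 u v (x + t • (y - x)) = 0} ⊆
          {t : ℝ | ((v.1-u.1)*(y.2-x.2) - (v.2-u.2)*(y.1-x.1))*t + det3 u v x = 0} := by
        intro t ht
        simp only [Set.mem_setOf_eq] at ht ⊢
        rw [← det3_affine]; exact ht.2.2
      refine Set.Finite.subset (finite_lin ?_) hsub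
      rintro ⟨hA, hBc⟩
      apply hbad.2
      have hy : det3 u v y = 0 := by
        have := det3_affine u v x y 1
        simp at this
        rw [this, hA, hBc]; ring
      exact ⟨col_trans hbad.1 hBc hy (det3_self u v),
             col_trans hbad.1 hBc hy (by unfold det3; ring)⟩
    · have : {t : ℝ | u ≠ v ∧ ¬ (det3 x y u = 0 ∧ det3 x y v = 0) ∧
          det3 u v (x + t • (y - x)) = 0} = ∅ := by
        ext t; simp only [Set.mem_setOf_eq, Set.mem_empty_iff_false, iff_false]
        tauto
      rw [this]; exact Set.finite_empty
  have hIoo : (Set.Ioo (0:ℝ) 1).Infinite := Set.Ioo_infinite (by norm_num)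
  obtain ⟨t, ht⟩ := (hIoo.diff hfin).nonempty
  obtain ⟨htI, htB⟩ := ht
  refine ⟨x + t • (y - x), seg_of_param t htI.1 htI.2, ?_⟩
  intro u hu v hv huv hdet
  by_contra hcon
  exact htB (Set.mem_biUnion (List.mem_toFinset.mpr hu)
    (Set.mem_biUnion (List.mem_toFinset.mpr hv) ⟨huv, hcon, hdet⟩))

open scoped Classical in
def nextPt (L : List Pt) (n : ℕ) : Pt :=
  if n.unpair.2 < n.unpair.1 ∧ n.unpair.1 < L.length ∧
      L.getD n.unpair.2 0 ≠ L.getD n.unpair.1 0 ∧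
      (∀ z ∈ L, det3 (L.getD n.unpair.2 0) (L.getD n.unpair.1 0) z = 0 →
        z = L.getD n.unpair.2 0 ∨ z = L.getD n.unpair.1 0)
  then (exists_blocker L (L.getD n.unpair.2 0) (L.getD n.unpair.1 0)).choose
  else (exists_seed L).choose

def seqL : ℕ → List Pt
  | 0 => []
  | n + 1 => seqL n ++ [nextPt (seqL n) n]

def f (n : ℕ) : Pt := nextPt (seqL n) n

lemma seqL_succ (n : ℕ) : seqL (n + 1) = seqL n ++ [f n] := rfl

lemma length_seqL (n : ℕ) : (seqL n).length = n := by
  induction n with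
  | zero => rfl
  | succ n ih => simp [seqL_succ, ih]

lemma mem_seqL {z : Pt} {n : ℕ} : z ∈ seqL n ↔ ∃ m, m < n ∧ f m = z := by
  induction n with
  | zero => simp [seqL]
  | succ n ih =>
    simp only [seqL_succ, List.mem_append, List.mem_singleton, ih]
    constructor
    · rintro (⟨m, hm, rfl⟩ | rfl)
      · exact ⟨m, by omega, rfl⟩
      · exact ⟨n, by omega, rfl⟩
    · rintro ⟨m, hm, rfl⟩
      rcases Nat.lt_succ_iff_lt_or_eq.mp hm with h | rfl
      · exact Or.inl ⟨m, h, rfl⟩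
      · exact Or.inr rfl

lemma getD_seqL {m n : ℕ} (h : m < n) : (seqL n).getD m 0 = f m := by
  induction n with
  | zero => omega
  | succ n ih =>
    rcases Nat.lt_succ_iff_lt_or_eq.mp h with h' | rfl
    · rw [seqL_succ, List.getD_append _ _ _ _ (by rw [length_seqL]; exact h')]
      exact ih h'
    · rw [seqL_succ, List.getD_append_right _ _ _ _ (by rw [length_seqL])]
      simp [length_seqL]

lemma f_mem_seqL {m n : ℕ} (h : m < n) : f m ∈ seqL n := mem_seqL.mpr ⟨m, h, rfl⟩

lemma step (n : ℕ) :
    (f n ∉ seqL n ∧ ∀ u ∈ seqL n, ∀ v ∈ seqL n, u ≠ v → det3 u v (f n) ≠ 0)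
    ∨ (∃ x y, x ∈ seqL n ∧ y ∈ seqL n ∧ x ≠ y ∧
        (∀ z ∈ seqL n, det3 x y z = 0 → z = x ∨ z = y) ∧
        f n ∈ openSegment ℝ x y ∧
        (∀ u ∈ seqL n, ∀ v ∈ seqL n, u ≠ v → det3 u v (f n) = 0 →
          det3 x y u = 0 ∧ det3 x y v = 0)) := by
  unfold f nextPt
  split_ifs with h
  · right
    obtain ⟨h1, h2, h3, h4⟩ := h
    have hx : (seqL n).getD n.unpair.2 0 ∈ seqL n := by
      rw [getD_seqL (by rw [length_seqL] at h2; omega)]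
      exact f_mem_seqL (by rw [length_seqL] at h2; omega)
    have hy : (seqL n).getD n.unpair.1 0 ∈ seqL n := by
      rw [getD_seqL (by rw [length_seqL] at h2; omega)]
      exact f_mem_seqL (by rw [length_seqL] at h2; omega)
    obtain ⟨hseg, hprop⟩ := (exists_blocker (seqL n) _ _).choose_spec
    exact ⟨_, _, hx, hy, h3, h4, hseg, hprop⟩
  · left
    obtain ⟨hmem, hprop⟩ := (exists_seed (seqL n)).choose_spec
    exact ⟨hmem, hprop⟩

lemma f_not_mem (n : ℕ) : f n ∉ seqL n := by
  rcases step n with ⟨h, -⟩ | ⟨x, y, hx, hy, hxy, hpre, hseg, -⟩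
  · exact h
  · intro hmem
    have hcol : det3 x y (f n) = 0 := seg_col hseg
    rcases hpre (f n) hmem hcol with h | h
    · exact (seg_ne hseg hxy).1 h
    · exact (seg_ne hseg hxy).2 h

lemma f_inj : Function.Injective f := by
  intro i j hij
  by_contra hne
  rcases Nat.lt_or_ge i j with h | h
  · exact f_not_mem j (hij ▸ f_mem_seqL h)
  · exact f_not_mem i (hij ▸ f_mem_seqL (by omega))

lemma invK {i j n : ℕ} (hi : i < n) (hj : j < n) (hne : f i ≠ f j)
    (hcol : det3 (f i) (f j) (f n) = 0) :
    f n ∈ openSegment ℝ (f i) (f j) := by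
  rcases step n with ⟨-, h⟩ | ⟨x, y, hx, hy, hxy, hpre, hseg, hprop⟩
  · exact absurd hcol (h _ (f_mem_seqL hi) _ (f_mem_seqL hj) hne)
  · obtain ⟨hu, hv⟩ := hprop _ (f_mem_seqL hi) _ (f_mem_seqL hj) hne hcol
    rcases hpre _ (f_mem_seqL hi) hu with h1 | h1 <;>
    rcases hpre _ (f_mem_seqL hj) hv with h2 | h2
    · exact absurd (h1.trans h2.symm) hne
    · rw [h1, h2]; exact hseg
    · rw [h1, h2]; exact (openSegment_symm ℝ y x) ▸ hseg
    · exact absurd (h1.trans h2.symm) hne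

lemma invG {i j i' j' n : ℕ} (hi : i < n) (hj : j < n) (hi' : i' < n) (hj' : j' < n)
    (hne : f i ≠ f j) (hne' : f i' ≠ f j')
    (h1 : det3 (f i) (f j) (f n) = 0) (h2 : det3 (f i') (f j') (f n) = 0) :
    det3 (f i) (f j) (f i') = 0 ∧ det3 (f i) (f j) (f j') = 0 := by
  rcases step n with ⟨-, h⟩ | ⟨x, y, hx, hy, hxy, hpre, hseg, hprop⟩
  · exact absurd h1 (h _ (f_mem_seqL hi) _ (f_mem_seqL hj) hne)
  · obtain ⟨hu1, hv1⟩ := hprop _ (f_mem_seqL hi) _ (f_mem_seqL hj) hne h1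
    obtain ⟨hu2, hv2⟩ := hprop _ (f_mem_seqL hi') _ (f_mem_seqL hj') hne' h2
    exact ⟨col_trans hxy hu1 hv1 hu2, col_trans hxy hu1 hv1 hv2⟩

lemma processed {i k : ℕ} (h : i < k) (hne : f i ≠ f k) :
    f (Nat.pair k i) ∈ openSegment ℝ (f i) (f k) ∨
    ∃ z ∈ seqL (Nat.pair k i), det3 (f i) (f k) z = 0 ∧ z ≠ f i ∧ z ≠ f k := by
  set n := Nat.pair k i with hn
  have hkn : k < n := by
    have h1 : ¬ k < i := by omega
    have h2 : n = k * k + k + i := by rw [hn, Nat.pair]; simp [h1]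
    have h3 : 1 * 1 ≤ k * k := Nat.mul_le_mul (by omega) (by omega)
    omega
  have hin : i < n := by omega
  have hup : n.unpair = (k, i) := by rw [hn, Nat.unpair_pair]
  have hup1 : n.unpair.1 = k := by rw [hup]
  have hup2 : n.unpair.2 = i := by rw [hup]
  have hgx : (seqL n).getD n.unpair.2 0 = f i := by rw [hup2]; exact getD_seqL hin
  have hgy : (seqL n).getD n.unpair.1 0 = f k := by rw [hup1]; exact getD_seqL hkn
  show nextPt (seqL n) n ∈ _ ∨ _
  unfold nextPt
  split_ifs with hc
  · refine Or.inl ?_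
    rw [← hgx, ← hgy]
    exact (exists_blocker (seqL n) ((seqL n).getD n.unpair.2 0)
      ((seqL n).getD n.unpair.1 0)).choose_spec.1
  · right
    rw [hgx, hgy, hup1, hup2] at hc
    simp only [not_and, not_forall] at hc
    obtain ⟨z, hz, hdet, hzo⟩ := hc h (by rw [length_seqL]; omega) hne
    push_neg at hzo
    exact ⟨z, hz, hdet, hzo⟩

def Pset : Set Pt := Set.range f

lemma vis_symm {v w : Pt} (h : Visible Pset v w) : Visible Pset w v := by
  refine ⟨h.1.symm, fun p hp hmem => h.2 p hp ?_⟩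
  rwa [openSegment_symm]

lemma visStruct {i k : ℕ} (hik : i < k) (hvis : Visible Pset (f i) (f k)) :
    ∃ m, m < k ∧ f i ≠ f m ∧ f k ∈ openSegment ℝ (f i) (f m) := by
  rcases processed hik hvis.1 with hseg | ⟨z, hz, hdet, hzi, hzk⟩
  · exact absurd hseg (hvis.2 _ (Set.mem_range_self _))
  · obtain ⟨m, hmn, rfl⟩ := mem_seqL.mp hz
    rcases Nat.lt_trichotomy m k with h | rfl | h
    · refine ⟨m, h, fun he => hzi he.symm, ?_⟩
      exact invK hik h (fun he => hzi he.symm) (by rw [det3_swap, hdet, neg_zero])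
    · exact absurd rfl hzk
    · exact absurd (invK (by omega) h hvis.1 hdet)
        (hvis.2 _ (Set.mem_range_self _))

lemma triangle_free {i j k : ℕ} (hij : i < j) (hjk : j < k)
    (v1 : Visible Pset (f i) (f j)) (v2 : Visible Pset (f i) (f k))
    (v3 : Visible Pset (f j) (f k)) : False := by
  obtain ⟨m1, hm1, hne1, hs1⟩ := visStruct (by omega) v2
  obtain ⟨m2, hm2, hne2, hs2⟩ := visStruct hjk v3
  have d1 : det3 (f i) (f m1) (f k) = 0 := seg_col hs1
  have d2 : det3 (f j) (f m2) (f k) = 0 := seg_col hs2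
  have hG := invG (n := k) (by omega) hm1 (by omega) hm2 hne1 hne2 d1 d2
  by_cases hjm : f j = f m1
  · rw [← hjm] at hs1
    exact v1.2 _ (Set.mem_range_self k) hs1
  · have dijk : det3 (f i) (f j) (f k) = 0 :=
      col_trans hne1 (det3_self (f i) (f m1)) hG.1 d1
    have := invK (n := k) (by omega) (by omega) v1.1 dijk
    exact v1.2 _ (Set.mem_range_self k) this

lemma core1d {A B C Q t1 t2 t3 : ℝ} (hAB : B - A ≠ 0)
    (e1 : Q = A + t1*(B-A)) (e2 : Q = A + t2*(C-A)) (e3 : Q = B + t3*(C-B))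
    (h10 : 0 < t1) (h11 : t1 < 1) (h20 : 0 < t2) (h21 : t2 < 1)
    (h30 : 0 < t3) (h31 : t3 < 1) : False := by
  have eqS : t1*(B-A) = t2*(C-A) := by linear_combination e2 - e1
  have eq3 : (t1-1)*(B-A) = t3*(C-B) := by linear_combination e3 - e1
  have R' : (t2*(t1-1) - t3*(t1-t2)) * (B-A) = 0 := by
    linear_combination t2 * eq3 - t3 * eqS
  have R : t2*(t1-1) - t3*(t1-t2) = 0 := (mul_eq_zero.mp R').resolve_right hAB
  have hR : t2*(1-t1) = t3*(t2-t1) := by linear_combination -R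
  rcases lt_trichotomy t1 t2 with h | h | h
  · have k1 : t2*(1-t1) > t2 - t1 := by nlinarith
    have k2 : t3*(t2-t1) < t2 - t1 := by nlinarith
    linarith
  · subst h
    nlinarith
  · nlinarith

lemma seg3 {a b c q : Pt} (hab : a ≠ b)
    (h1 : q ∈ openSegment ℝ a b) (h2 : q ∈ openSegment ℝ a c)
    (h3 : q ∈ openSegment ℝ b c) : False := by
  obtain ⟨t1, h10, h11, hq1⟩ := seg_param h1
  obtain ⟨t2, h20, h21, hq2⟩ := seg_param h2
  obtain ⟨t3, h30, h31, hq3⟩ := seg_param h3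
  have c1 : q.1 = a.1 + t1*(b.1-a.1) := by rw [hq1]; simp
  have c2 : q.2 = a.2 + t1*(b.2-a.2) := by rw [hq1]; simp
  have d1 : q.1 = a.1 + t2*(c.1-a.1) := by rw [hq2]; simp
  have d2 : q.2 = a.2 + t2*(c.2-a.2) := by rw [hq2]; simp
  have e1 : q.1 = b.1 + t3*(c.1-b.1) := by rw [hq3]; simp
  have e2 : q.2 = b.2 + t3*(c.2-b.2) := by rw [hq3]; simp
  by_cases hco : b.1 - a.1 ≠ 0
  · exact core1d hco c1 d1 e1 h10 h11 h20 h21 h30 h31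
  · push_neg at hco
    have hco2 : b.2 - a.2 ≠ 0 := by
      intro h
      exact hab (Prod.ext (by linarith) (by linarith))
    exact core1d hco2 c2 d2 e2 h10 h11 h20 h21 h30 h31

lemma helper4 {i j k l : ℕ} (hil : i < l) (hjl : j < l) (hkl : k < l)
    (hij : f i ≠ f j) (hik : f i ≠ f k) (hjk : f j ≠ f k)
    (d1 : det3 (f i) (f j) (f l) = 0) (d2 : det3 (f i) (f k) (f l) = 0)
    (d3 : det3 (f j) (f k) (f l) = 0) : False :=
  seg3 hij (invK hil hjl hij d1) (invK hil hkl hik d2) (invK hjl hkl hjk d3)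

end
end BLBC

open BLBC in
theorem stmt10 :
    ∃ P : Set (ℝ × ℝ), P.Infinite ∧ No4Collinear P ∧
      ¬ ∃ T : Finset (ℝ × ℝ), ↑T ⊆ P ∧ T.card = 6 ∧
        ∀ v ∈ T, ∀ w ∈ T, v ≠ w → Visible P v w := by
  refine ⟨Pset, Set.infinite_range_of_injective f_inj, ?_, ?_⟩
  · intro a ha b hb c hc d hd hab hac had hbc hbd hcd hcol
    obtain ⟨ia, rfl⟩ := ha
    obtain ⟨ib, rfl⟩ := hb
    obtain ⟨ic, rfl⟩ := hc
    obtain ⟨id, rfl⟩ := hd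
    have tri : ∀ u v w : Pt, u ∈ ({f ia, f ib, f ic, f id} : Set Pt) →
        v ∈ ({f ia, f ib, f ic, f id} : Set Pt) →
        w ∈ ({f ia, f ib, f ic, f id} : Set Pt) → det3 u v w = 0 := by
      intro u v w hu hv hw
      refine (collinear_iff_det3 u v w).1 (hcol.subset ?_)
      rintro p (rfl | rfl | rfl)
      · exact hu
      · exact hv
      · exact hw
    have nab : ia ≠ ib := fun h => hab (congrArg f h)
    have nac : ia ≠ ic := fun h => hac (congrArg f h)
    have nad : ia ≠ id := fun h => had (congrArg f h)
    have nbc : ib ≠ ic := fun h => hbc (congrArg f h)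
    have nbd : ib ≠ id := fun h => hbd (congrArg f h)
    have ncd : ic ≠ id := fun h => hcd (congrArg f h)
    have hmax : (ib < ia ∧ ic < ia ∧ id < ia) ∨ (ia < ib ∧ ic < ib ∧ id < ib) ∨
        (ia < ic ∧ ib < ic ∧ id < ic) ∨ (ia < id ∧ ib < id ∧ ic < id) := by omega
    rcases hmax with ⟨u1, u2, u3⟩ | ⟨u1, u2, u3⟩ | ⟨u1, u2, u3⟩ | ⟨u1, u2, u3⟩
    · exact helper4 u1 u2 u3 hbc hbd hcd
        (tri _ _ _ (by simp) (by simp) (by simp))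
        (tri _ _ _ (by simp) (by simp) (by simp))
        (tri _ _ _ (by simp) (by simp) (by simp))
    · exact helper4 u1 u2 u3 hac had hcd
        (tri _ _ _ (by simp) (by simp) (by simp))
        (tri _ _ _ (by simp) (by simp) (by simp))
        (tri _ _ _ (by simp) (by simp) (by simp))
    · exact helper4 u1 u2 u3 hab had hbd
        (tri _ _ _ (by simp) (by simp) (by simp))
        (tri _ _ _ (by simp) (by simp) (by simp))
        (tri _ _ _ (by simp) (by simp) (by simp))
    · exact helper4 u1 u2 u3 hab hac hbc
        (tri _ _ _ (by simp) (by simp) (by simp))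
        (tri _ _ _ (by simp) (by simp) (by simp))
        (tri _ _ _ (by simp) (by simp) (by simp))
  · rintro ⟨T, hTP, hcard, hvis⟩
    have hane : T.Nonempty := Finset.card_pos.mp (by omega)
    obtain ⟨a, haT⟩ := hane
    have hbne : (T.erase a).Nonempty := by
      rw [← Finset.card_pos, Finset.card_erase_of_mem haT]; omega
    obtain ⟨b, hbT'⟩ := hbne
    obtain ⟨hba, hbT⟩ := Finset.mem_erase.mp hbT'
    have hcne : ((T.erase a).erase b).Nonempty := by
      rw [← Finset.card_pos, Finset.card_erase_of_mem hbT',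
        Finset.card_erase_of_mem haT]; omega
    obtain ⟨c, hcT''⟩ := hcne
    obtain ⟨hcb, hcT'⟩ := Finset.mem_erase.mp hcT''
    obtain ⟨hca, hcT⟩ := Finset.mem_erase.mp hcT'
    have vab : Visible Pset a b := hvis a haT b hbT (Ne.symm hba)
    have vac : Visible Pset a c := hvis a haT c hcT (Ne.symm hca)
    have vbc : Visible Pset b c := hvis b hbT c hcT (Ne.symm hcb)
    obtain ⟨i, rfl⟩ := hTP haT
    obtain ⟨j, rfl⟩ := hTP hbT
    obtain ⟨k, rfl⟩ := hTP hcT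
    have nij : i ≠ j := fun h => hba (congrArg f h).symm
    have nik : i ≠ k := fun h => hca (congrArg f h).symm
    have njk : j ≠ k := fun h => hcb (congrArg f h).symm
    rcases Nat.lt_trichotomy i j with hij | hij | hij
    · rcases Nat.lt_trichotomy j k with hjk | hjk | hjk
      · exact triangle_free hij hjk vab vac vbc
      · exact absurd hjk njk
      · rcases Nat.lt_trichotomy i k with hik | hik | hik
        · exact triangle_free hik hjk vac vab (vis_symm vbc)
        · exact absurd hik nik
        · exact triangle_free hik hij (vis_symm vac) (vis_symm vbc) vab
    · exact absurd hij nij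
    · rcases Nat.lt_trichotomy i k with hik | hik | hik
      · exact triangle_free hij hik (vis_symm vab) vbc vac
      · exact absurd hik nik
      · rcases Nat.lt_trichotomy j k with hjk | hjk | hjk
        · exact triangle_free hjk hik vbc (vis_symm vab) (vis_symm vac)
        · exact absurd hjk njk
        · exact triangle_free hjk hij (vis_symm vbc) (vis_symm vac) (vis_symm vab)
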